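/- Let Γ = (Γ₀, Γ₁, ν, τ) be a connected valued stable translation quiver such that ⟨τ⟩ is an admissible subgroup of the automorphism group of Γ, and let f : Γ₀ → ℕ₀ be a nonzero additive function with f ∘ τ = f. Then f takes only strictly positive values, the function φ : Γ₀/⟨τ⟩ → ℕ₊ given by φ([x]) := f(x) is well defined, and φ is additive on the valued graph (Γ₀/⟨τ⟩, d), i.e. 2φ([y]) = Σ_{[x]} φ([x])·d([x],[y]) for every orbit [y]. -/

import Mathlib

/-- A valued stable translation quiver `(Γ₀, Γ₁, ν, τ)`: the vertex set is `V`, the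
arrow set `Γ₁ ⊆ Γ₀ × Γ₀` is given by the relation `Arrow`, `ν` is a valuation with
`Γ₁ = ν⁻¹(ℕ₊ × ℕ₊)`, the quiver has no loops and is locally finite, and `τ` is a
translation satisfying `ν(τ(b),a) = Δ(ν(a,b))` for all arrows `(a,b)`. -/
structure ValuedStableTranslationQuiver (V : Type*) where
  /-- the arrow relation -/
  Arrow : V → V → Prop
  /-- the valuation -/
  nu : V → V → ℕ × ℕ
  /-- the translation -/
  tau : V ≃ V
  arrow_iff : ∀ x y, Arrow x y ↔ (0 < (nu x y).1 ∧ 0 < (nu x y).2)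
  no_loops : ∀ x, ¬ Arrow x x
  locally_finite : ∀ x, {y | Arrow x y ∨ Arrow y x}.Finite
  tau_arrow : ∀ x y, Arrow (tau x) (tau y) ↔ Arrow x y
  translation : ∀ a y, Arrow y a ↔ Arrow (tau a) y
  valued : ∀ a b, Arrow a b → nu (tau b) a = ((nu a b).2, (nu a b).1)

namespace ValuedStableTranslationQuiver

variable {V : Type*} (Q : ValuedStableTranslationQuiver V)

/-- the set of predecessors of a vertex is finite -/
theorem predsFinite (y : V) : {x | Q.Arrow x y}.Finite :=
  (Q.locally_finite y).subset fun _ hx => Or.inr hx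

/-- the finset of predecessors `y⁻` of a vertex `y` -/
noncomputable def preds (y : V) : Finset V := (Q.predsFinite y).toFinset

/-- a function `f : Γ₀ → ℕ₀` is subadditive if
`f(y) + f(τ(y)) ≥ ∑_{x ∈ y⁻} f(x)·pr₁(ν(x,y))` for all vertices `y` -/
def Subadditive (f : V → ℕ) : Prop :=
  ∀ y, ∑ x ∈ Q.preds y, f x * (Q.nu x y).1 ≤ f y + f (Q.tau y)

/-- a function `f : Γ₀ → ℕ₀` is additive if
`f(y) + f(τ(y)) = ∑_{x ∈ y⁻} f(x)·pr₁(ν(x,y))` for all vertices `y` -/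
def Additive (f : V → ℕ) : Prop :=
  ∀ y, f y + f (Q.tau y) = ∑ x ∈ Q.preds y, f x * (Q.nu x y).1

/-- connectedness of the underlying undirected graph -/
def Connected : Prop :=
  ∀ x y : V, Relation.ReflTransGen (fun a b => Q.Arrow a b ∨ Q.Arrow b a) x y

end ValuedStableTranslationQuiver


namespace ValuedStableTranslationQuiver

variable {V : Type*} (Q : ValuedStableTranslationQuiver V)

/-- the `⟨τ⟩`-orbit equivalence relation on the vertices -/
def tauSetoid : Setoid V where
  r a b := ∃ k : ℤ, (Q.tau ^ k) a = b
  iseqv := by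
    constructor
    · exact fun a => ⟨0, by simp⟩
    · rintro a b ⟨k, rfl⟩
      exact ⟨-k, by rw [← Equiv.Perm.mul_apply, ← zpow_add]; simp⟩
    · rintro a b c ⟨k, rfl⟩ ⟨l, rfl⟩
      exact ⟨l + k, by rw [zpow_add, Equiv.Perm.mul_apply]⟩

/-- `⟨τ⟩` is an admissible subgroup of `Aut(Γ)`. -/
def TauAdmissible : Prop :=
  ∀ x y : V,
    (Set.range (fun k : ℤ => (Q.tau ^ k) x) ∩ ({y} ∪ {z | Q.Arrow y z})).Subsingleton ∧
    (Set.range (fun k : ℤ => (Q.tau ^ k) x) ∩ ({y} ∪ {z | Q.Arrow z y})).Subsingleton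

end ValuedStableTranslationQuiver

namespace ValuedStableTranslationQuiver

variable {V : Type*} (Q : ValuedStableTranslationQuiver V)

open Classical in
/-- The valued-graph structure `d` on the set of `⟨τ⟩`-orbits `Γ₀/⟨τ⟩`:
`d([x],[y]) = pr₁(ν(a,b))` if there are representatives `a ∈ [x]`, `b ∈ [y]` with an
arrow `a → b`, and `d([x],[y]) = 0` otherwise.  (When `⟨τ⟩` is admissible this does not
depend on the choice of representatives.) -/
noncomputable def dOrb : Quotient (tauSetoid Q) → Quotient (tauSetoid Q) → ℕ :=
  fun c c' =>
    if h : ∃ a b : V, Quotient.mk (tauSetoid Q) a = c ∧ Quotient.mk (tauSetoid Q) b = c' ∧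
        Q.Arrow a b
    then (Q.nu h.choose h.choose_spec.choose).1
    else 0

end ValuedStableTranslationQuiver

namespace ValuedStableTranslationQuiver

variable {V : Type*} (Q : ValuedStableTranslationQuiver V)

lemma arrow_tau_inv_iff (a b : V) : Q.Arrow (Q.tau⁻¹ a) (Q.tau⁻¹ b) ↔ Q.Arrow a b := by
  rw [← Q.tau_arrow]; simp

lemma arrow_zpow_iff (k : ℤ) :
    ∀ a b : V, Q.Arrow ((Q.tau ^ k) a) ((Q.tau ^ k) b) ↔ Q.Arrow a b := by
  induction k using Int.induction_on with
  | zero => simp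
  | succ n ih =>
      intro a b
      rw [zpow_add_one]
      simp only [Equiv.Perm.mul_apply]
      rw [ih, Q.tau_arrow]
  | pred n ih =>
      intro a b
      rw [zpow_sub_one]
      simp only [Equiv.Perm.mul_apply]
      rw [ih, Q.arrow_tau_inv_iff]

lemma nu_tau (a b : V) (h : Q.Arrow a b) : Q.nu (Q.tau a) (Q.tau b) = Q.nu a b := by
  have h1 : Q.Arrow (Q.tau b) a := (Q.translation b a).mp h
  have h2 := Q.valued _ _ h1
  rw [Q.valued a b h] at h2
  simpa using h2

lemma nu_tau_inv (a b : V) (h : Q.Arrow a b) : Q.nu (Q.tau⁻¹ a) (Q.tau⁻¹ b) = Q.nu a b := by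
  have h' : Q.Arrow (Q.tau⁻¹ a) (Q.tau⁻¹ b) := (Q.arrow_tau_inv_iff a b).mpr h
  have := Q.nu_tau _ _ h'
  simpa using this.symm

lemma nu_zpow (k : ℤ) :
    ∀ a b : V, Q.Arrow a b → Q.nu ((Q.tau ^ k) a) ((Q.tau ^ k) b) = Q.nu a b := by
  induction k using Int.induction_on with
  | zero => simp
  | succ n ih =>
      intro a b h
      rw [zpow_add_one]
      simp only [Equiv.Perm.mul_apply]
      rw [ih _ _ ((Q.tau_arrow a b).mpr h), Q.nu_tau a b h]
  | pred n ih =>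
      intro a b h
      rw [zpow_sub_one]
      simp only [Equiv.Perm.mul_apply]
      rw [ih _ _ ((Q.arrow_tau_inv_iff a b).mpr h), Q.nu_tau_inv a b h]

lemma mem_preds {x y : V} : x ∈ Q.preds y ↔ Q.Arrow x y := by
  simp [preds]

lemma f_zpow {f : V → ℕ} (htau : ∀ x, f (Q.tau x) = f x) (k : ℤ) :
    ∀ x : V, f ((Q.tau ^ k) x) = f x := by
  induction k using Int.induction_on with
  | zero => simp
  | succ n ih =>
      intro x
      rw [zpow_add_one]
      simp only [Equiv.Perm.mul_apply]
      rw [ih, htau]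
  | pred n ih =>
      intro x
      rw [zpow_sub_one]
      simp only [Equiv.Perm.mul_apply]
      rw [ih]
      have := htau (Q.tau⁻¹ x)
      simpa using this.symm

/-- same-orbit predecessors of a vertex coincide (admissibility) -/
lemma pred_unique (hadm : Q.TauAdmissible) {y x₁ x₂ : V}
    (h₁ : Q.Arrow x₁ y) (h₂ : Q.Arrow x₂ y) (h : (tauSetoid Q).r x₁ x₂) : x₁ = x₂ := by
  obtain ⟨k, hk⟩ := h
  exact (hadm x₁ y).2 ⟨⟨0, by simp⟩, Or.inr h₁⟩ ⟨⟨k, hk⟩, Or.inr h₂⟩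

lemma dOrb_pred (hadm : Q.TauAdmissible) {x y : V} (hx : Q.Arrow x y) :
    dOrb Q (Quotient.mk (tauSetoid Q) x) (Quotient.mk (tauSetoid Q) y) = (Q.nu x y).1 := by
  have hex : ∃ a b : V, Quotient.mk (tauSetoid Q) a = Quotient.mk (tauSetoid Q) x ∧
      Quotient.mk (tauSetoid Q) b = Quotient.mk (tauSetoid Q) y ∧ Q.Arrow a b :=
    ⟨x, y, rfl, rfl, hx⟩
  rw [dOrb, dif_pos hex]
  obtain ⟨ha, hb, hab⟩ := hex.choose_spec.choose_spec
  set a := hex.choose with hadef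
  set b := hex.choose_spec.choose with hbdef
  obtain ⟨l, hl⟩ : (tauSetoid Q).r b y := Quotient.exact hb
  have harr : Q.Arrow ((Q.tau ^ l) a) y := by
    rw [← hl]; exact (Q.arrow_zpow_iff l a b).mpr hab
  have hnu : Q.nu ((Q.tau ^ l) a) y = Q.nu a b := by
    rw [← hl]; exact Q.nu_zpow l a b hab
  have horb : (tauSetoid Q).r ((Q.tau ^ l) a) x := by
    have : Quotient.mk (tauSetoid Q) ((Q.tau ^ l) a) = Quotient.mk (tauSetoid Q) x := by
      rw [← ha]
      exact Quotient.sound ((tauSetoid Q).symm ⟨l, rfl⟩)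
    exact Quotient.exact this
  have := Q.pred_unique hadm harr hx horb
  rw [← hnu, this]

end ValuedStableTranslationQuiver

open ValuedStableTranslationQuiver in
/-- Lemma 1.3(2): if `Γ` is connected, `⟨τ⟩` is admissible and `f : Γ₀ → ℕ₀` is a nonzero
additive function with `f ∘ τ = f`, then `f` is strictly positive and there is a
well-defined additive function `φ : Γ₀/⟨τ⟩ → ℕ₊` on the orbit valued graph with
`φ([x]) = f(x)` for every vertex `x`. -/
theorem statement4 {V : Type*} (Q : ValuedStableTranslationQuiver V)
    (hconn : Q.Connected) (hadm : Q.TauAdmissible)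
    (f : V → ℕ) (hadd : Q.Additive f) (htau : ∀ x, f (Q.tau x) = f x)
    (hne : ∃ x, f x ≠ 0) :
    (∀ x, 0 < f x) ∧
    ∃ φ : Quotient (tauSetoid Q) → ℕ,
      (∀ x : V, φ (Quotient.mk (tauSetoid Q) x) = f x) ∧
      ∀ c' : Quotient (tauSetoid Q), 2 * φ c' = ∑ᶠ c : Quotient (tauSetoid Q),
        φ c * dOrb Q c c' := by
  classical
  have hfz : ∀ (k : ℤ) (x : V), f ((Q.tau ^ k) x) = f x := Q.f_zpow htau
  -- the zero set of f is closed under (undirected) adjacency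
  have hspread : ∀ y, f y = 0 → ∀ x, (Q.Arrow x y ∨ Q.Arrow y x) → f x = 0 := by
    intro y hy x hx
    have hzero : ∀ z, Q.Arrow z y → f z = 0 := by
      intro z hz
      have hsum : (∑ x ∈ Q.preds y, f x * (Q.nu x y).1) = 0 := by
        rw [← hadd y, htau, hy]
      have hterm := (Finset.sum_eq_zero_iff).mp hsum z ((Q.mem_preds).mpr hz)
      have hposnu := ((Q.arrow_iff z y).mp hz).1
      rcases Nat.mul_eq_zero.mp hterm with h | h
      · exact h
      · omega
    rcases hx with hx | hx
    · exact hzero x hx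
    · have : Q.Arrow (Q.tau x) y := (Q.translation x y).mp hx
      have := hzero _ this
      rwa [htau] at this
  obtain ⟨x₀, hx₀⟩ := hne
  have hpos : ∀ x, 0 < f x := by
    intro x
    have hne' : f x ≠ 0 := by
      induction hconn x₀ x with
      | refl => exact hx₀
      | tail h₁ h₂ ih => exact fun hc => ih (hspread _ hc _ h₂)
    exact Nat.pos_of_ne_zero hne'
  have hresp : ∀ a b : V, (tauSetoid Q).r a b → f a = f b := by
    rintro a b ⟨k, rfl⟩
    exact (hfz k a).symm
  refine ⟨hpos, Quotient.lift f hresp, fun x => rfl, ?_⟩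
  intro c'
  induction c' using Quotient.inductionOn with
  | h y =>
    set φ := Quotient.lift f hresp with hφ
    have hsupp : Function.support (fun c => φ c * dOrb Q c (Quotient.mk (tauSetoid Q) y)) ⊆
        ↑((Q.preds y).image (Quotient.mk (tauSetoid Q))) := by
      intro c hc
      simp only [Function.mem_support] at hc
      by_cases hex : ∃ a b : V, Quotient.mk (tauSetoid Q) a = c ∧
          Quotient.mk (tauSetoid Q) b = Quotient.mk (tauSetoid Q) y ∧ Q.Arrow a b
      · obtain ⟨a, b, ha, hb, hab⟩ := hex
        obtain ⟨l, hl⟩ : (tauSetoid Q).r b y := Quotient.exact hb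
        have harr : Q.Arrow ((Q.tau ^ l) a) y := by
          rw [← hl]; exact (Q.arrow_zpow_iff l a b).mpr hab
        refine Finset.mem_coe.mpr (Finset.mem_image.mpr
          ⟨(Q.tau ^ l) a, (Q.mem_preds).mpr harr, ?_⟩)
        rw [← ha]
        exact Quotient.sound ((tauSetoid Q).symm ⟨l, rfl⟩)
      · have hd0 : dOrb Q c (Quotient.mk (tauSetoid Q) y) = 0 := by
          simp only [dOrb]
          rw [dif_neg hex]
        exact absurd (by rw [hd0, mul_zero]) hc
    rw [finsum_eq_sum_of_support_subset _ hsupp]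
    rw [Finset.sum_image (fun x hx x' hx' h =>
      Q.pred_unique hadm ((Q.mem_preds).mp hx) ((Q.mem_preds).mp hx') (Quotient.exact h))]
    have hcongr : ∀ x ∈ Q.preds y,
        φ (Quotient.mk (tauSetoid Q) x) *
          dOrb Q (Quotient.mk (tauSetoid Q) x) (Quotient.mk (tauSetoid Q) y)
        = f x * (Q.nu x y).1 := by
      intro x hx
      rw [Q.dOrb_pred hadm ((Q.mem_preds).mp hx)]
      rfl
    rw [Finset.sum_congr rfl hcongr, ← hadd y, htau]
    show 2 * f y = f y + f y
    omega
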